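/- The natural map F(L) → F(A) ≅ A/[A,A] sending the class of a⊗b (a, b ∈ L) to tr(ab) is injective, where F(L) = (L⊗L)/⟨a⊗b − b⊗a, a⊗[b,c] − [a,b]⊗c⟩. -/

import Mathlib

noncomputable section
open TensorProduct

attribute [local instance 100] LieRing.ofAssociativeRing

abbrev A : Type := FreeAlgebra ℝ (Fin 2)
abbrev B : Type := A ⊗[ℝ] A

def X : A := FreeAlgebra.ι ℝ 0
def Y : A := FreeAlgebra.ι ℝ 1

/-- Generator matrices used to define the noncommutative partial derivative `pd d`. -/
def genMat (d i : Fin 2) : Matrix (Fin 2) (Fin 2) B :=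
  !![(Algebra.TensorProduct.includeLeft : A →ₐ[ℝ] B) (FreeAlgebra.ι ℝ i), if i = d then 1 else 0;
     0, Algebra.TensorProduct.includeRight (FreeAlgebra.ι ℝ i)]

def Φmat (d : Fin 2) : A →ₐ[ℝ] Matrix (Fin 2) (Fin 2) B :=
  FreeAlgebra.lift ℝ (genMat d)

/-- The noncommutative partial derivative `∂_x` (for `d = 0`) resp. `∂_y` (for `d = 1`):
on a monomial it splits the word at each occurrence of the letter `d`. -/
def pd (d : Fin 2) (a : A) : B := Φmat d a 0 1

/-- The subspace `[A,A]` spanned by commutators; `tr(A) = A/[A,A]` is the trace space. -/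
def commSub : Submodule ℝ A := Submodule.span ℝ {p : A | ∃ a b : A, p = a * b - b * a}

/-- The trace projection `tr : A → A/[A,A]`. -/
def trc (a : A) : A ⧸ commSub := Submodule.Quotient.mk a

/-- Reversed multiplication `μ_flip : A ⊗ A → A`, `b ⊗ c ↦ c·b`. -/
def flipMul : B →ₗ[ℝ] A :=
  (LinearMap.mul' ℝ A).comp (TensorProduct.comm ℝ A A).toLinearMap

/-- The free Lie algebra `L ⊂ A`: the smallest Lie subalgebra of `A` (with bracket
`[a,b] = ab − ba`) containing `x` and `y`. -/
def L : LieSubalgebra ℝ A := LieSubalgebra.lieSpan ℝ A {X, Y}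

/-- The relations defining `F(L) = (L ⊗ L)/⟨a⊗b − b⊗a, a⊗[b,c] − [a,b]⊗c⟩`. -/
def FLrel : Submodule ℝ (↥L ⊗[ℝ] ↥L) :=
  Submodule.span ℝ
    ({t | ∃ a b : ↥L, t = a ⊗ₜ[ℝ] b - b ⊗ₜ[ℝ] a} ∪
     {t | ∃ a b c : ↥L, t = a ⊗ₜ[ℝ] ⁅b, c⁆ - ⁅a, b⁆ ⊗ₜ[ℝ] c})

/-- The natural map `L ⊗ L → F(A) = A/[A,A]`, `a ⊗ b ↦ tr(ab)`. -/
def toTrace : (↥L ⊗[ℝ] ↥L) →ₗ[ℝ] (A ⧸ commSub) :=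
  commSub.mkQ.comp ((LinearMap.mul' ℝ A).comp
    (TensorProduct.map L.incl.toLinearMap L.incl.toLinearMap))

-- shorthand
abbrev gen (i : Fin 2) : A := FreeAlgebra.ι ℝ i
abbrev inclL : A →ₐ[ℝ] B := Algebra.TensorProduct.includeLeft
abbrev inclR : A →ₐ[ℝ] B := Algebra.TensorProduct.includeRight

lemma Φmat_entries (d : Fin 2) (a : A) :
    Φmat d a 0 0 = inclL a ∧ Φmat d a 1 0 = 0 ∧ Φmat d a 1 1 = inclR a := by
  induction a using FreeAlgebra.induction with
  | grade0 r =>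
      have : Φmat d ((algebraMap ℝ A) r) = algebraMap ℝ _ r := by
        simp [AlgHom.commutes]
      rw [this]
      refine ⟨?_, ?_, ?_⟩ <;>
        simp [Matrix.algebraMap_matrix_apply, AlgHom.commutes]
  | grade1 i =>
      have : Φmat d (FreeAlgebra.ι ℝ i) = genMat d i := FreeAlgebra.lift_ι_apply _ _
      rw [this]
      refine ⟨?_, ?_, ?_⟩ <;> simp [genMat]
  | mul a b ha hb =>
      rw [map_mul]
      obtain ⟨ha0, ha1, ha2⟩ := ha
      obtain ⟨hb0, hb1, hb2⟩ := hb
      refine ⟨?_, ?_, ?_⟩ <;>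
        simp [Matrix.mul_apply, Fin.sum_univ_two, ha0, ha1, ha2, hb0, hb1, hb2]
  | add a b ha hb =>
      rw [map_add]
      obtain ⟨ha0, ha1, ha2⟩ := ha
      obtain ⟨hb0, hb1, hb2⟩ := hb
      refine ⟨?_, ?_, ?_⟩ <;> simp [Matrix.add_apply, ha0, ha1, ha2, hb0, hb1, hb2, TensorProduct.add_tmul, TensorProduct.tmul_add]

lemma pd_mul (d : Fin 2) (a b : A) :
    pd d (a * b) = inclL a * pd d b + pd d a * inclR b := by
  have h := map_mul (Φmat d) a b
  have : Φmat d (a * b) 0 1 = ∑ j : Fin 2, Φmat d a 0 j * Φmat d b j 1 := by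
    rw [h]; simp [Matrix.mul_apply]
  rw [pd, this, Fin.sum_univ_two, (Φmat_entries d a).1, (Φmat_entries d b).2.2]
  rfl

lemma pd_ι (d i : Fin 2) : pd d (gen i) = if i = d then 1 else 0 := by
  rw [pd, Φmat, FreeAlgebra.lift_ι_apply]
  simp [genMat]

lemma pd_add (d : Fin 2) (a b : A) : pd d (a + b) = pd d a + pd d b := by
  simp [pd, map_add]

lemma pd_sub (d : Fin 2) (a b : A) : pd d (a - b) = pd d a - pd d b := by
  simp [pd, map_sub]

lemma pd_smul (d : Fin 2) (r : ℝ) (a : A) : pd d (r • a) = r • pd d a := by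
  simp [pd, map_smul]

lemma flipMul_tmul (u v : A) : flipMul (u ⊗ₜ[ℝ] v) = v * u := by
  simp [flipMul]

/-- insertion map `u ⊗ v ↦ v * c * u`. -/
def mIns (c : A) : B →ₗ[ℝ] A :=
  flipMul.comp (LinearMap.lTensor A (LinearMap.mulRight ℝ c))

lemma mIns_tmul (c u v : A) : mIns c (u ⊗ₜ[ℝ] v) = v * c * u := by
  simp [mIns, flipMul, mul_assoc]

lemma flipMul_inclL_mul (g : A) (t : B) : flipMul (inclL g * t) = mIns g t := by
  induction t using TensorProduct.induction_on with
  | zero => simp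
  | tmul u v => simp [Algebra.TensorProduct.tmul_mul_tmul, flipMul_tmul, mIns_tmul, mul_assoc]
  | add x y hx hy => rw [mul_add, map_add, hx, hy, map_add]

lemma flipMul_mul_inclR (g : A) (t : B) : flipMul (t * inclR g) = mIns g t := by
  induction t using TensorProduct.induction_on with
  | zero => simp
  | tmul u v => simp [Algebra.TensorProduct.tmul_mul_tmul, flipMul_tmul, mIns_tmul, mul_assoc]
  | add x y hx hy => rw [add_mul, map_add, hx, hy, map_add]

lemma mIns_inclL_mul (c g : A) (t : B) : mIns c (inclL g * t) = mIns (c * g) t := by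
  induction t using TensorProduct.induction_on with
  | zero => simp
  | tmul u v => simp [Algebra.TensorProduct.tmul_mul_tmul, mIns_tmul, mul_assoc]
  | add x y hx hy => rw [mul_add, map_add, hx, hy, ← map_add]

lemma mIns_mul_inclR (c g : A) (t : B) : mIns c (t * inclR g) = mIns (g * c) t := by
  induction t using TensorProduct.induction_on with
  | zero => simp
  | tmul u v => simp [Algebra.TensorProduct.tmul_mul_tmul, mIns_tmul, mul_assoc]
  | add x y hx hy => rw [add_mul, map_add, hx, hy, ← map_add]

lemma mIns_add_c (c c' : A) (t : B) : mIns (c + c') t = mIns c t + mIns c' t := by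
  induction t using TensorProduct.induction_on with
  | zero => simp
  | tmul u v => simp [mIns_tmul]; noncomm_ring
  | add x y hx hy => simp only [map_add, hx, hy]; abel

lemma mIns_sub_c (c c' : A) (t : B) : mIns (c - c') t = mIns c t - mIns c' t := by
  induction t using TensorProduct.induction_on with
  | zero => simp
  | tmul u v => simp [mIns_tmul]; noncomm_ring
  | add x y hx hy => simp only [map_add, hx, hy]; abel

lemma flipMul_pd_mul (d : Fin 2) (a b : A) :
    flipMul (pd d (a * b)) = mIns a (pd d b) + mIns b (pd d a) := by
  rw [pd_mul, map_add, flipMul_inclL_mul, flipMul_mul_inclR]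

/-- `ad`-representation: algebra map sending `x_i` to `ad x_i`. -/
def adA : A →ₐ[ℝ] Module.End ℝ A :=
  FreeAlgebra.lift ℝ (fun i => LinearMap.mulLeft ℝ (gen i) - LinearMap.mulRight ℝ (gen i))

/-- counit -/
def εA : A →ₐ[ℝ] ℝ := FreeAlgebra.algebraMapInv

lemma εA_ι (i : Fin 2) : εA (gen i) = 0 := by
  simp [εA, FreeAlgebra.algebraMapInv, FreeAlgebra.lift_ι_apply]

/-- `a ↦ ε(a) • x_i` -/
def κmap (i : Fin 2) : Module.End ℝ A := (εA.toLinearMap).smulRight (gen i)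

/-- matrix representation computing the Dynkin map -/
def Ψδ : A →ₐ[ℝ] Matrix (Fin 2) (Fin 2) (Module.End ℝ A) :=
  FreeAlgebra.lift ℝ (fun i => !![adA (gen i), κmap i; 0, 0])

lemma Ψδ_entries (a : A) :
    Ψδ a 0 0 = adA a ∧ Ψδ a 1 0 = 0 ∧ Ψδ a 1 1 = εA a • (1 : Module.End ℝ A) := by
  induction a using FreeAlgebra.induction with
  | grade0 r =>
      rw [AlgHom.commutes]
      refine ⟨?_, ?_, ?_⟩ <;>
        simp [Matrix.algebraMap_matrix_apply, AlgHom.commutes,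
          Algebra.algebraMap_eq_smul_one]
  | grade1 i =>
      rw [Ψδ, FreeAlgebra.lift_ι_apply]
      refine ⟨?_, ?_, ?_⟩ <;> simp [εA_ι]
  | mul a b ha hb =>
      rw [map_mul, map_mul]
      obtain ⟨ha0, ha1, ha2⟩ := ha
      obtain ⟨hb0, hb1, hb2⟩ := hb
      refine ⟨?_, ?_, ?_⟩ <;>
        simp [Matrix.mul_apply, Fin.sum_univ_two, ha0, ha1, ha2, hb0, hb1, hb2, map_mul,
          smul_smul, mul_comm]
  | add a b ha hb =>
      rw [map_add, map_add]
      obtain ⟨ha0, ha1, ha2⟩ := ha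
      obtain ⟨hb0, hb1, hb2⟩ := hb
      refine ⟨?_, ?_, ?_⟩ <;>
        simp [Matrix.add_apply, ha0, ha1, ha2, hb0, hb1, hb2, map_add, add_smul]

/-- the Dynkin map -/
def δA (a : A) : A := Ψδ a 0 1 1

lemma δA_mul (a b : A) : δA (a * b) = adA a (δA b) + εA b • δA a := by
  have h : Ψδ (a * b) 0 1 = Ψδ a 0 0 * Ψδ b 0 1 + Ψδ a 0 1 * Ψδ b 1 1 := by
    rw [map_mul]; simp [Matrix.mul_apply, Fin.sum_univ_two]
  rw [δA, h, (Ψδ_entries a).1, (Ψδ_entries b).2.2]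
  simp [δA, Module.End.mul_apply]

lemma δA_ι (i : Fin 2) : δA (gen i) = gen i := by
  rw [δA, Ψδ, FreeAlgebra.lift_ι_apply]
  simp [κmap, map_one]

lemma δA_algebraMap (r : ℝ) : δA (algebraMap ℝ A r) = 0 := by
  rw [δA, AlgHom.commutes]
  simp [Matrix.algebraMap_matrix_apply]

lemma δA_add (a b : A) : δA (a + b) = δA a + δA b := by simp [δA, map_add]
lemma δA_sub (a b : A) : δA (a - b) = δA a - δA b := by simp [δA, map_sub]
lemma δA_smul (r : ℝ) (a : A) : δA (r • a) = r • δA a := by simp [δA, map_smul]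

lemma gen_mem_L (i : Fin 2) : gen i ∈ L := by
  apply LieSubalgebra.subset_lieSpan
  fin_cases i
  · left; rfl
  · right; rfl

/-- Lie monomials with their degree -/
inductive IsMon : ℕ → A → Prop
  | gen (i : Fin 2) : IsMon 1 (gen i)
  | brk {p q : ℕ} {a b : A} : IsMon p a → IsMon q b → IsMon (p + q) (a * b - b * a)

lemma IsMon.mem_L {p : ℕ} {a : A} (h : IsMon p a) : a ∈ L := by
  induction h with
  | gen i => exact gen_mem_L i
  | brk ha hb iha ihb =>
      have := L.lie_mem iha ihb
      rwa [Ring.lie_def] at this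

lemma IsMon.pos {p : ℕ} {a : A} (h : IsMon p a) : 1 ≤ p := by
  induction h with
  | gen i => exact le_refl 1
  | brk ha hb iha ihb => omega

lemma IsMon.eps {p : ℕ} {a : A} (h : IsMon p a) : εA a = 0 := by
  induction h with
  | gen i => exact εA_ι i
  | brk ha hb iha ihb => simp [map_sub, map_mul, iha, ihb]

lemma adA_of_mon {p : ℕ} {a : A} (h : IsMon p a) :
    adA a = LinearMap.mulLeft ℝ a - LinearMap.mulRight ℝ a := by
  induction h with
  | gen i => exact FreeAlgebra.lift_ι_apply _ _
  | brk ha hb iha ihb =>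
      rw [map_sub, map_mul, map_mul, iha, ihb]
      ext c
      simp only [LinearMap.sub_apply, Module.End.mul_apply, LinearMap.mulLeft_apply,
        LinearMap.mulRight_apply]
      noncomm_ring

lemma adA_mon_apply {p : ℕ} {a : A} (h : IsMon p a) (c : A) :
    adA a c = a * c - c * a := by
  rw [adA_of_mon h]; simp

lemma δA_mon {p : ℕ} {a : A} (h : IsMon p a) : δA a = (p : ℝ) • a := by
  induction h with
  | gen i => rw [δA_ι]; simp
  | brk ha hb iha ihb =>
      rename_i p q a b
      rw [δA_sub, δA_mul, δA_mul, iha, ihb, ha.eps, hb.eps,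
        adA_mon_apply ha, adA_mon_apply hb]
      rw [mul_smul_comm, mul_smul_comm, smul_mul_assoc, smul_mul_assoc]
      push_cast
      module

lemma adA_preserves_L (a : A) (c : A) (hc : c ∈ L) : adA a c ∈ L := by
  induction a using FreeAlgebra.induction generalizing c with
  | grade0 r =>
      rw [AlgHom.commutes]
      simpa [Algebra.algebraMap_eq_smul_one] using Submodule.smul_mem L.toSubmodule r hc
  | grade1 i =>
      rw [adA, FreeAlgebra.lift_ι_apply]
      have := L.lie_mem (gen_mem_L i) hc
      rw [Ring.lie_def] at this
      simpa using this
  | mul a b ha hb =>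
      rw [map_mul]
      exact ha _ (hb _ hc)
  | add a b ha hb =>
      rw [map_add]
      exact L.toSubmodule.add_mem (ha _ hc) (hb _ hc)

lemma δA_mem_L (a : A) : δA a ∈ L := by
  induction a using FreeAlgebra.induction with
  | grade0 r => rw [δA_algebraMap]; exact L.toSubmodule.zero_mem
  | grade1 i => rw [δA_ι]; exact gen_mem_L i
  | mul a b ha hb =>
      rw [δA_mul]
      exact L.toSubmodule.add_mem (adA_preserves_L a _ hb) (L.toSubmodule.smul_mem _ ha)
  | add a b ha hb => rw [δA_add]; exact L.toSubmodule.add_mem ha hb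

abbrev Q : Type := (↥L ⊗[ℝ] ↥L) ⧸ FLrel

def qQ : (↥L ⊗[ℝ] ↥L) →ₗ[ℝ] Q := FLrel.mkQ

lemma qQ_symm (a b : ↥L) : qQ (a ⊗ₜ[ℝ] b) = qQ (b ⊗ₜ[ℝ] a) := by
  rw [qQ, ← sub_eq_zero, ← map_sub, Submodule.mkQ_apply, Submodule.Quotient.mk_eq_zero]
  exact Submodule.subset_span (Or.inl ⟨a, b, rfl⟩)

lemma qQ_inv (a b c : ↥L) : qQ (a ⊗ₜ[ℝ] ⁅b, c⁆) = qQ (⁅a, b⁆ ⊗ₜ[ℝ] c) := by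
  rw [qQ, ← sub_eq_zero, ← map_sub, Submodule.mkQ_apply, Submodule.Quotient.mk_eq_zero]
  exact Submodule.subset_span (Or.inr ⟨a, b, c, rfl⟩)

def XL (i : Fin 2) : ↥L := ⟨gen i, gen_mem_L i⟩

def δL : A →ₗ[ℝ] ↥L where
  toFun a := ⟨δA a, δA_mem_L a⟩
  map_add' a b := Subtype.ext (δA_add a b)
  map_smul' r a := Subtype.ext (δA_smul r a)

/-- the key bilinear quantity -/
def βQ (a c : A) : Q := ∑ i : Fin 2, qQ (XL i ⊗ₜ[ℝ] δL (mIns c (pd i a)))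

lemma βQ_sub_c (a c c' : A) : βQ a (c - c') = βQ a c - βQ a c' := by
  rw [βQ, βQ, βQ, ← Finset.sum_sub_distrib]
  congr 1; ext i
  rw [mIns_sub_c, map_sub, TensorProduct.tmul_sub, map_sub]

lemma βQ_neg_c (a c : A) : βQ a (-c) = -βQ a c := by
  have := βQ_sub_c a 0 c
  simpa [βQ, mIns, map_zero] using this

/-- Main Lemma: value of `βQ` on Lie monomials. -/
lemma βQ_mon {p q : ℕ} {a b : A} (ha : IsMon p a) (hb : IsMon q b) :
    βQ a b = ((p : ℝ) * ((p : ℝ) + (q : ℝ) - 1)) •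
      qQ ((⟨a, ha.mem_L⟩ : ↥L) ⊗ₜ[ℝ] (⟨b, hb.mem_L⟩ : ↥L)) := by
  induction ha generalizing q b with
  | gen i =>
      have hone : mIns b (1 : B) = b := by
        have h1 : (1 : B) = (1 : A) ⊗ₜ[ℝ] (1 : A) := rfl
        rw [h1, mIns_tmul]; simp
      have h1 : ∀ j : Fin 2, mIns b (pd j (gen i)) = if i = j then b else 0 := by
        intro j
        rw [pd_ι]
        split <;> simp [hone]
      have hδb : δL b = (q : ℝ) • (⟨b, hb.mem_L⟩ : ↥L) := by
        apply Subtype.ext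
        simpa [δL] using δA_mon hb
      rw [βQ]
      have h2 : ∀ j : Fin 2, qQ (XL j ⊗ₜ[ℝ] δL (mIns b (pd j (gen i)))) =
          if i = j then qQ (XL j ⊗ₜ[ℝ] δL b) else 0 := by
        intro j
        rw [h1 j]
        split <;> simp
      rw [Finset.sum_congr rfl (fun j _ => h2 j), Finset.sum_ite_eq (Finset.univ) i
        (fun j => qQ (XL j ⊗ₜ[ℝ] δL b)), if_pos (Finset.mem_univ i), hδb,
        TensorProduct.tmul_smul, map_smul]
      congr 1
      push_cast; ring
  | brk ha1 ha2 ih1 ih2 =>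
      rename_i p1 p2 a1 a2
      -- decompose pd of the bracket
      have hpd : ∀ i : Fin 2, mIns b (pd i (a1 * a2 - a2 * a1)) =
          mIns (a2 * b - b * a2) (pd i a1) + mIns (b * a1 - a1 * b) (pd i a2) := by
        intro i
        rw [pd_sub, map_sub, pd_mul, pd_mul, map_add, map_add,
          mIns_inclL_mul, mIns_mul_inclR, mIns_inclL_mul, mIns_mul_inclR,
          mIns_sub_c, mIns_sub_c]
        abel
      have hsplit : βQ (a1 * a2 - a2 * a1) b =
          βQ a1 (a2 * b - b * a2) + βQ a2 (b * a1 - a1 * b) := by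
        rw [βQ, βQ, βQ, ← Finset.sum_add_distrib]
        congr 1; ext i
        rw [hpd i, map_add, TensorProduct.tmul_add, map_add]
      have hmon1 : IsMon (p2 + q) (a2 * b - b * a2) := IsMon.brk ha2 hb
      have hmon2 : IsMon (p1 + q) (a1 * b - b * a1) := IsMon.brk ha1 hb
      have hneg : βQ a2 (b * a1 - a1 * b) = - βQ a2 (a1 * b - b * a1) := by
        rw [← βQ_neg_c]; congr 1; abel
      rw [hsplit, hneg, ih1 hmon1, ih2 hmon2]
      -- now the relations
      have e1 : qQ ((⟨a1, ha1.mem_L⟩ : ↥L) ⊗ₜ[ℝ] (⟨a2 * b - b * a2, hmon1.mem_L⟩ : ↥L)) =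
          qQ ((⟨a1 * a2 - a2 * a1, (IsMon.brk ha1 ha2).mem_L⟩ : ↥L) ⊗ₜ[ℝ] (⟨b, hb.mem_L⟩ : ↥L)) := by
        have h2 : (⟨a2 * b - b * a2, hmon1.mem_L⟩ : ↥L) =
            ⁅(⟨a2, ha2.mem_L⟩ : ↥L), (⟨b, hb.mem_L⟩ : ↥L)⁆ := by
          apply Subtype.ext
          rw [LieSubalgebra.coe_bracket, Ring.lie_def]
        have h12 : (⟨a1 * a2 - a2 * a1, (IsMon.brk ha1 ha2).mem_L⟩ : ↥L) =
            ⁅(⟨a1, ha1.mem_L⟩ : ↥L), (⟨a2, ha2.mem_L⟩ : ↥L)⁆ := by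
          apply Subtype.ext
          rw [LieSubalgebra.coe_bracket, Ring.lie_def]
        rw [h2, h12, qQ_inv]
      have e2 : qQ ((⟨a2, ha2.mem_L⟩ : ↥L) ⊗ₜ[ℝ] (⟨a1 * b - b * a1, hmon2.mem_L⟩ : ↥L)) =
          - qQ ((⟨a1 * a2 - a2 * a1, (IsMon.brk ha1 ha2).mem_L⟩ : ↥L) ⊗ₜ[ℝ] (⟨b, hb.mem_L⟩ : ↥L)) := by
        have h2 : (⟨a1 * b - b * a1, hmon2.mem_L⟩ : ↥L) =
            ⁅(⟨a1, ha1.mem_L⟩ : ↥L), (⟨b, hb.mem_L⟩ : ↥L)⁆ := by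
          apply Subtype.ext
          rw [LieSubalgebra.coe_bracket, Ring.lie_def]
        have h21 : ⁅(⟨a2, ha2.mem_L⟩ : ↥L), (⟨a1, ha1.mem_L⟩ : ↥L)⁆ =
            - (⟨a1 * a2 - a2 * a1, (IsMon.brk ha1 ha2).mem_L⟩ : ↥L) := by
          rw [← lie_skew]
          congr 1
        rw [h2, qQ_inv, h21, TensorProduct.neg_tmul, map_neg]
      rw [e1, e2]
      rw [smul_neg, neg_neg, ← add_smul]
      congr 1
      push_cast
      ring

/-- linear version of pd -/
def pdL (d : Fin 2) : A →ₗ[ℝ] B where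
  toFun := pd d
  map_add' := pd_add d
  map_smul' := pd_smul d

/-- the retraction-like map `σ : A → F(L)` -/
def σQ : A →ₗ[ℝ] Q :=
  ∑ i : Fin 2, qQ.comp ((TensorProduct.mk ℝ (↥L) (↥L) (XL i)).comp
    (δL.comp (flipMul.comp (pdL i))))

lemma σQ_apply (a : A) :
    σQ a = ∑ i : Fin 2, qQ (XL i ⊗ₜ[ℝ] δL (flipMul (pd i a))) := by
  simp [σQ, LinearMap.sum_apply, pdL]

lemma σQ_mul (a b : A) : σQ (a * b) = βQ b a + βQ a b := by
  rw [σQ_apply]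
  have h : ∀ i : Fin 2, qQ (XL i ⊗ₜ[ℝ] δL (flipMul (pd i (a * b)))) =
      qQ (XL i ⊗ₜ[ℝ] δL (mIns a (pd i b))) + qQ (XL i ⊗ₜ[ℝ] δL (mIns b (pd i a))) := by
    intro i
    rw [flipMul_pd_mul, map_add, TensorProduct.tmul_add, map_add]
  rw [Finset.sum_congr rfl (fun i _ => h i), Finset.sum_add_distrib]
  rfl

lemma σQ_comm (a b : A) : σQ (a * b - b * a) = 0 := by
  rw [map_sub, σQ_mul, σQ_mul]
  abel

lemma σQ_commSub {u : A} (hu : u ∈ commSub) : σQ u = 0 := by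
  induction hu using Submodule.span_induction with
  | mem x hx => obtain ⟨a, b, rfl⟩ := hx; exact σQ_comm a b
  | zero => simp
  | add x y _ _ hx hy => rw [map_add, hx, hy, add_zero]
  | smul r x _ hx => rw [map_smul, hx, smul_zero]

lemma σQ_mon_mul {p q : ℕ} {a b : A} (ha : IsMon p a) (hb : IsMon q b) :
    σQ (a * b) = (((p : ℝ) + q) * ((p : ℝ) + q - 1)) •
      qQ ((⟨a, ha.mem_L⟩ : ↥L) ⊗ₜ[ℝ] (⟨b, hb.mem_L⟩ : ↥L)) := by
  rw [σQ_mul, βQ_mon hb ha, βQ_mon ha hb, qQ_symm, ← add_smul]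
  congr 1
  ring

open Classical in
/-- degree-`n` projection of the free algebra -/
def πd (n : ℕ) : A →ₗ[ℝ] A where
  toFun a := (FreeAlgebra.equivMonoidAlgebraFreeMonoid (R := ℝ) (X := Fin 2)).symm
    (MonoidAlgebra.ofCoeff (Finsupp.filter (fun w : FreeMonoid (Fin 2) => w.length = n)
      (FreeAlgebra.equivMonoidAlgebraFreeMonoid (R := ℝ) (X := Fin 2) a).coeff))
  map_add' a b := by
    rw [map_add, MonoidAlgebra.coeff_add, Finsupp.filter_add, MonoidAlgebra.ofCoeff_add, map_add]
  map_smul' r a := by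
    rw [map_smul, MonoidAlgebra.coeff_smul, Finsupp.filter_smul, MonoidAlgebra.ofCoeff_smul, map_smul]
    rfl

/-- word -/
def wd (l : List (Fin 2)) : A := (l.map (FreeAlgebra.ι ℝ)).prod

lemma wd_nil : wd [] = 1 := rfl

lemma wd_cons (i : Fin 2) (l : List (Fin 2)) : wd (i :: l) = gen i * wd l := by
  simp [wd]

lemma wd_append (l l' : List (Fin 2)) : wd (l ++ l') = wd l * wd l' := by
  simp [wd]

lemma em_wd (l : List (Fin 2)) :
    FreeAlgebra.equivMonoidAlgebraFreeMonoid (R := ℝ) (X := Fin 2) (wd l) =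
      MonoidAlgebra.single (FreeMonoid.ofList l) 1 := by
  induction l with
  | nil =>
      rw [wd_nil, map_one]
      rfl
  | cons i l ih =>
      rw [wd_cons, map_mul, ih, FreeMonoid.ofList_cons]
      have : FreeAlgebra.equivMonoidAlgebraFreeMonoid (R := ℝ) (X := Fin 2) (gen i) =
          MonoidAlgebra.single (FreeMonoid.of i) 1 := by
        simp [FreeAlgebra.equivMonoidAlgebraFreeMonoid]
      rw [this, MonoidAlgebra.single_mul_single, one_mul]

lemma πd_wd (n : ℕ) (l : List (Fin 2)) :
    πd n (wd l) = if l.length = n then wd l else 0 := by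
  classical
  have hlen : (FreeMonoid.ofList l).length = l.length := rfl
  show (FreeAlgebra.equivMonoidAlgebraFreeMonoid (R := ℝ) (X := Fin 2)).symm
    (MonoidAlgebra.ofCoeff (Finsupp.filter _ (FreeAlgebra.equivMonoidAlgebraFreeMonoid (R := ℝ) (X := Fin 2) (wd l)).coeff)) = _
  rw [em_wd, MonoidAlgebra.coeff_single]
  split
  · rename_i h
    rw [Finsupp.filter_single_of_pos _ (by rw [hlen]; exact h)]
    have h2 := congrArg
      (FreeAlgebra.equivMonoidAlgebraFreeMonoid (R := ℝ) (X := Fin 2)).symm (em_wd l)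
    rw [AlgEquiv.symm_apply_apply] at h2
    exact h2.symm
  · rename_i h
    rw [Finsupp.filter_single_of_neg _ (by rw [hlen]; exact h), MonoidAlgebra.ofCoeff_zero, map_zero]

/-- span of words of length n -/
def Wd (n : ℕ) : Submodule ℝ A :=
  Submodule.span ℝ {a : A | ∃ l : List (Fin 2), l.length = n ∧ a = wd l}

lemma Wd_mul {m n : ℕ} {a b : A} (ha : a ∈ Wd m) (hb : b ∈ Wd n) : a * b ∈ Wd (m + n) := by
  induction ha using Submodule.span_induction generalizing b with
  | mem x hx =>
      induction hb using Submodule.span_induction with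
      | mem y hy =>
          obtain ⟨l, hl, rfl⟩ := hx
          obtain ⟨l', hl', rfl⟩ := hy
          rw [← wd_append]
          exact Submodule.subset_span ⟨l ++ l', by simp [hl, hl'], rfl⟩
      | zero => rw [mul_zero]; exact (Wd _).zero_mem
      | add y z _ _ hy hz => rw [mul_add]; exact (Wd _).add_mem hy hz
      | smul r y _ hy => rw [mul_smul_comm]; exact (Wd _).smul_mem r hy
  | zero => rw [zero_mul]; exact (Wd _).zero_mem
  | add x y _ _ hx hy => rw [add_mul]; exact (Wd _).add_mem (hx hb) (hy hb)
  | smul r x _ hx => rw [smul_mul_assoc]; exact (Wd _).smul_mem r (hx hb)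

lemma πd_Wd_eq {n : ℕ} {a : A} (ha : a ∈ Wd n) : πd n a = a := by
  induction ha using Submodule.span_induction with
  | mem x hx =>
      obtain ⟨l, hl, rfl⟩ := hx
      rw [πd_wd, if_pos hl]
  | zero => simp
  | add x y _ _ hx hy => rw [map_add, hx, hy]
  | smul r x _ hx => rw [map_smul, hx]

lemma πd_Wd_ne {m n : ℕ} (hmn : m ≠ n) {a : A} (ha : a ∈ Wd m) : πd n a = 0 := by
  induction ha using Submodule.span_induction with
  | mem x hx =>
      obtain ⟨l, hl, rfl⟩ := hx
      rw [πd_wd, if_neg (by rw [hl]; exact hmn)]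
  | zero => simp
  | add x y _ _ hx hy => rw [map_add, hx, hy, add_zero]
  | smul r x _ hx => rw [map_smul, hx, smul_zero]

lemma IsMon.mem_Wd {p : ℕ} {a : A} (h : IsMon p a) : a ∈ Wd p := by
  induction h with
  | gen i => exact Submodule.subset_span ⟨[i], rfl, by simp [wd]⟩
  | brk ha hb iha ihb =>
      exact (Wd _).sub_mem (Wd_mul iha ihb)
        (by rw [Nat.add_comm]; exact Wd_mul ihb iha)

/-- span of all words -/
def SW : Submodule ℝ A := Submodule.span ℝ {a : A | ∃ l : List (Fin 2), a = wd l}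

lemma SW_mul {a b : A} (ha : a ∈ SW) (hb : b ∈ SW) : a * b ∈ SW := by
  induction ha using Submodule.span_induction generalizing b with
  | mem x hx =>
      induction hb using Submodule.span_induction with
      | mem y hy =>
          obtain ⟨l, rfl⟩ := hx
          obtain ⟨l', rfl⟩ := hy
          rw [← wd_append]
          exact Submodule.subset_span ⟨l ++ l', rfl⟩
      | zero => rw [mul_zero]; exact SW.zero_mem
      | add y z _ _ hy hz => rw [mul_add]; exact SW.add_mem hy hz
      | smul r y _ hy => rw [mul_smul_comm]; exact SW.smul_mem r hy
  | zero => rw [zero_mul]; exact SW.zero_mem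
  | add x y _ _ hx hy => rw [add_mul]; exact SW.add_mem (hx hb) (hy hb)
  | smul r x _ hx => rw [smul_mul_assoc]; exact SW.smul_mem r (hx hb)

lemma mem_SW (a : A) : a ∈ SW := by
  induction a using FreeAlgebra.induction with
  | grade0 r =>
      have : (algebraMap ℝ A) r = r • wd [] := by
        rw [wd_nil, Algebra.algebraMap_eq_smul_one]
      rw [this]
      exact SW.smul_mem r (Submodule.subset_span ⟨[], rfl⟩)
  | grade1 i =>
      exact Submodule.subset_span ⟨[i], by simp [wd]⟩
  | mul a b ha hb => exact SW_mul ha hb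
  | add a b ha hb => exact SW.add_mem ha hb

/-- span of word commutators -/
def CW : Submodule ℝ A :=
  Submodule.span ℝ {c : A | ∃ l l' : List (Fin 2), c = wd l * wd l' - wd l' * wd l}

lemma comm_mem_CW (a b : A) : a * b - b * a ∈ CW := by
  have ha := mem_SW a
  induction ha using Submodule.span_induction generalizing b with
  | mem x hx =>
      have hb := mem_SW b
      induction hb using Submodule.span_induction with
      | mem y hy =>
          obtain ⟨l, rfl⟩ := hx
          obtain ⟨l', rfl⟩ := hy
          exact Submodule.subset_span ⟨l, l', rfl⟩
      | zero => simpa using CW.zero_mem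
      | add y z hy' hz' hy hz =>
          have : x * (y + z) - (y + z) * x = (x * y - y * x) + (x * z - z * x) := by
            noncomm_ring
          rw [this]
          exact CW.add_mem hy hz
      | smul r y hy' hy =>
          have : x * (r • y) - (r • y) * x = r • (x * y - y * x) := by
            rw [mul_smul_comm, smul_mul_assoc, smul_sub]
          rw [this]
          exact CW.smul_mem r hy
  | zero => simpa using CW.zero_mem
  | add x y hx' hy' hx hy =>
      have : (x + y) * b - b * (x + y) = (x * b - b * x) + (y * b - b * y) := by
        noncomm_ring
      rw [this]
      exact CW.add_mem (hx b) (hy b)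
  | smul r x hx' hx =>
      have : (r • x) * b - b * (r • x) = r • (x * b - b * x) := by
        rw [mul_smul_comm, smul_mul_assoc, smul_sub]
      rw [this]
      exact CW.smul_mem r (hx b)

lemma πd_commSub (n : ℕ) {u : A} (hu : u ∈ commSub) : πd n u ∈ commSub := by
  have hCW : u ∈ CW := by
    refine Submodule.span_le.mpr ?_ hu
    rintro c ⟨a, b, rfl⟩
    exact comm_mem_CW a b
  clear hu
  induction hCW using Submodule.span_induction with
  | mem x hx =>
      obtain ⟨l, l', rfl⟩ := hx
      rw [map_sub, ← wd_append, ← wd_append, πd_wd, πd_wd]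
      have hlen : (l ++ l').length = (l' ++ l).length := by simp [Nat.add_comm]
      by_cases h : (l ++ l').length = n
      · rw [if_pos h, if_pos (by omega), wd_append, wd_append]
        exact Submodule.subset_span ⟨wd l, wd l', rfl⟩
      · rw [if_neg h, if_neg (by omega), sub_zero]
        exact commSub.zero_mem
  | zero => simpa using commSub.zero_mem
  | add x y _ _ hx hy => rw [map_add]; exact commSub.add_mem hx hy
  | smul r x _ hx => rw [map_smul]; exact commSub.smul_mem r hx

/-- span of Lie monomials -/
def SM : Submodule ℝ A := Submodule.span ℝ {a : A | ∃ p, IsMon p a}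

lemma SM_lie {a b : A} (ha : a ∈ SM) (hb : b ∈ SM) : a * b - b * a ∈ SM := by
  induction ha using Submodule.span_induction generalizing b with
  | mem x hx =>
      induction hb using Submodule.span_induction with
      | mem y hy =>
          obtain ⟨p, hp⟩ := hx
          obtain ⟨q, hq⟩ := hy
          exact Submodule.subset_span ⟨p + q, IsMon.brk hp hq⟩
      | zero => simpa using SM.zero_mem
      | add y z _ _ hy hz =>
          have : x * (y + z) - (y + z) * x = (x * y - y * x) + (x * z - z * x) := by
            noncomm_ring
          rw [this]; exact SM.add_mem hy hz
      | smul r y _ hy =>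
          have : x * (r • y) - (r • y) * x = r • (x * y - y * x) := by
            rw [mul_smul_comm, smul_mul_assoc, smul_sub]
          rw [this]; exact SM.smul_mem r hy
  | zero => simpa using SM.zero_mem
  | add x y _ _ hx hy =>
      have : (x + y) * b - b * (x + y) = (x * b - b * x) + (y * b - b * y) := by
        noncomm_ring
      rw [this]; exact SM.add_mem (hx hb) (hy hb)
  | smul r x _ hx =>
      have : (r • x) * b - b * (r • x) = r • (x * b - b * x) := by
        rw [mul_smul_comm, smul_mul_assoc, smul_sub]
      rw [this]; exact SM.smul_mem r (hx hb)

/-- SM as a Lie subalgebra -/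
def SML : LieSubalgebra ℝ A :=
  { SM with
    lie_mem' := by
      intro x y hx hy
      rw [Ring.lie_def]
      exact SM_lie hx hy }

lemma L_le_SM {a : A} (ha : a ∈ L) : a ∈ SM := by
  have h : L ≤ SML := by
    rw [L, LieSubalgebra.lieSpan_le]
    rintro x (rfl | rfl)
    · exact Submodule.subset_span ⟨1, IsMon.gen 0⟩
    · exact Submodule.subset_span ⟨1, IsMon.gen 1⟩
  exact h ha

/-- monomial elements of ↥L -/
def SmL : Set (↥L) := {x : ↥L | ∃ p, IsMon p (x : A)}

lemma L_subtype_span (x : ↥L) : x ∈ Submodule.span ℝ SmL := by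
  have h1 : L.toSubmodule ≤ Submodule.map (L.toSubmodule.subtype) (Submodule.span ℝ SmL) := by
    intro a ha
    have h2 : a ∈ SM := L_le_SM ha
    refine Submodule.span_le.mpr ?_ h2
    rintro c ⟨p, hp⟩
    exact ⟨⟨c, hp.mem_L⟩, Submodule.subset_span ⟨p, hp⟩, rfl⟩
  obtain ⟨y, hy, hxy⟩ := h1 x.2
  have : y = x := Subtype.ext hxy
  rwa [← this]

/-- every tensor is a combination of monomial pure tensors -/
lemma tensor_mon_span (t : ↥L ⊗[ℝ] ↥L) :
    t ∈ Submodule.span ℝ {z : ↥L ⊗[ℝ] ↥L |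
      ∃ (x y : ↥L) (p q : ℕ), IsMon p (x : A) ∧ IsMon q (y : A) ∧ z = x ⊗ₜ[ℝ] y} := by
  set S := {z : ↥L ⊗[ℝ] ↥L |
      ∃ (x y : ↥L) (p q : ℕ), IsMon p (x : A) ∧ IsMon q (y : A) ∧ z = x ⊗ₜ[ℝ] y}
  have htop : t ∈ (⊤ : Submodule ℝ (↥L ⊗[ℝ] ↥L)) := trivial
  rw [← TensorProduct.span_tmul_eq_top ℝ (↥L) (↥L)] at htop
  induction htop using Submodule.span_induction with
  | mem z hz =>
      obtain ⟨x, y, rfl⟩ := hz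
      have hx := L_subtype_span x
      induction hx using Submodule.span_induction generalizing y with
      | mem u hu =>
          have hy := L_subtype_span y
          induction hy using Submodule.span_induction with
          | mem v hv =>
              obtain ⟨p, hp⟩ := hu
              obtain ⟨q, hq⟩ := hv
              exact Submodule.subset_span ⟨u, v, p, q, hp, hq, rfl⟩
          | zero => simpa [TensorProduct.tmul_zero] using (Submodule.span ℝ S).zero_mem
          | add v w _ _ hv hw =>
              rw [TensorProduct.tmul_add]
              exact (Submodule.span ℝ S).add_mem hv hw
          | smul r v _ hv =>
              rw [TensorProduct.tmul_smul]
              exact (Submodule.span ℝ S).smul_mem r hv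
      | zero => simpa [TensorProduct.zero_tmul] using (Submodule.span ℝ S).zero_mem
      | add u w _ _ hu hw =>
          rw [TensorProduct.add_tmul]
          exact (Submodule.span ℝ S).add_mem (hu y) (hw y)
      | smul r u _ hu =>
          rw [← TensorProduct.smul_tmul']
          exact (Submodule.span ℝ S).smul_mem r (hu y)
  | zero => exact (Submodule.span ℝ S).zero_mem
  | add x y _ _ hx hy => exact (Submodule.span ℝ S).add_mem hx hy
  | smul r x _ hx => exact (Submodule.span ℝ S).smul_mem r hx

/-- the multiplication map `L ⊗ L → A` -/
def mulA : (↥L ⊗[ℝ] ↥L) →ₗ[ℝ] A :=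
  (LinearMap.mul' ℝ A).comp (TensorProduct.map L.incl.toLinearMap L.incl.toLinearMap)

lemma mulA_tmul (x y : ↥L) : mulA (x ⊗ₜ[ℝ] y) = (x : A) * (y : A) := by
  simp [mulA, TensorProduct.map_tmul, LinearMap.mul'_apply]

lemma toTrace_eq (t : ↥L ⊗[ℝ] ↥L) : toTrace t = Submodule.Quotient.mk (mulA t) := rfl

lemma FLrel_le_ker (t : ↥L ⊗[ℝ] ↥L) (ht : t ∈ FLrel) : toTrace t = 0 := by
  induction ht using Submodule.span_induction with
  | mem z hz =>
      rcases hz with ⟨a, b, rfl⟩ | ⟨a, b, c, rfl⟩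
      · rw [map_sub, toTrace_eq, toTrace_eq, mulA_tmul, mulA_tmul, ← Submodule.Quotient.mk_sub,
          Submodule.Quotient.mk_eq_zero]
        exact Submodule.subset_span ⟨(a : A), (b : A), rfl⟩
      · rw [map_sub, toTrace_eq, toTrace_eq, mulA_tmul, mulA_tmul,
          ← Submodule.Quotient.mk_sub, Submodule.Quotient.mk_eq_zero]
        have hb : ((⁅a, b⁆ : ↥L) : A) = (a : A) * b - (b : A) * a := by
          rw [LieSubalgebra.coe_bracket, Ring.lie_def]
        have hc : ((⁅b, c⁆ : ↥L) : A) = (b : A) * c - (c : A) * b := by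
          rw [LieSubalgebra.coe_bracket, Ring.lie_def]
        rw [hb, hc]
        have key : (a : A) * ((b : A) * c - (c : A) * b) -
            ((a : A) * b - (b : A) * a) * c =
            (b : A) * ((a : A) * c) - ((a : A) * c) * b := by
          noncomm_ring
        rw [key]
        exact Submodule.subset_span ⟨b, (a : A) * c, rfl⟩
  | zero => simp
  | add x y _ _ hx hy => rw [map_add, hx, hy, add_zero]
  | smul r x _ hx => rw [map_smul, hx, smul_zero]

/-- The natural map `F(L) → F(A)`, `a ⊗ b ↦ tr(ab)`, is well defined and injective:
an element of `L ⊗ L` maps to `0` in `A/[A,A]` iff it lies in the subspace of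
defining relations of `F(L)`. -/
theorem FL_to_FA_injective (t : ↥L ⊗[ℝ] ↥L) :
    toTrace t = 0 ↔ t ∈ FLrel := by
  constructor
  · intro h0
    -- the product lies in [A,A]
    have hmem : mulA t ∈ commSub := by
      rw [toTrace_eq] at h0
      rwa [Submodule.Quotient.mk_eq_zero] at h0
    -- representation by monomial pure tensors
    have hspan := tensor_mon_span t
    rw [Submodule.mem_span_set'] at hspan
    obtain ⟨N, f, g, hsum⟩ := hspan
    have hg : ∀ i, ∃ (x y : ↥L) (p q : ℕ),
        IsMon p (x : A) ∧ IsMon q (y : A) ∧ (g i : ↥L ⊗[ℝ] ↥L) = x ⊗ₜ[ℝ] y :=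
      fun i => (g i).2
    choose x y p q hp hq hz using hg
    have ht : t = ∑ i : Fin N, f i • (x i ⊗ₜ[ℝ] y i) := by
      rw [← hsum]
      exact (Finset.sum_congr rfl (fun i _ => by rw [hz i])).symm
    set d : Fin N → ℕ := fun i => p i + q i with hd
    classical
    set T : ℕ → (↥L ⊗[ℝ] ↥L) := fun m =>
      ∑ i ∈ Finset.univ.filter (fun i => d i = m), f i • (x i ⊗ₜ[ℝ] y i) with hT
    have hfib : ∑ m ∈ Finset.univ.image d, T m = t := by
      rw [ht, hT]
      exact Finset.sum_fiberwise_of_maps_to (fun i _ => Finset.mem_image_of_mem d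
        (Finset.mem_univ i)) _
    -- each graded piece of the product is in [A,A]
    have hWd : ∀ i : Fin N, ((x i : A) * (y i : A)) ∈ Wd (d i) :=
      fun i => Wd_mul (hp i).mem_Wd (hq i).mem_Wd
    have hπ : ∀ m : ℕ, πd m (mulA t) = mulA (T m) := by
      intro m
      rw [ht, map_sum, map_sum, hT, map_sum]
      rw [← Finset.sum_filter_add_sum_filter_not Finset.univ (fun i => d i = m)
        (fun i => πd m (mulA (f i • (x i ⊗ₜ[ℝ] y i))))]
      have h1 : ∀ i ∈ Finset.univ.filter (fun i => d i = m),
          πd m (mulA (f i • (x i ⊗ₜ[ℝ] y i))) = mulA (f i • (x i ⊗ₜ[ℝ] y i)) := by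
        intro i hi
        rw [Finset.mem_filter] at hi
        simp only [map_smul, mulA_tmul]
        rw [πd_Wd_eq (hi.2 ▸ hWd i)]
      have h2 : ∀ i ∈ Finset.univ.filter (fun i => ¬ d i = m),
          πd m (mulA (f i • (x i ⊗ₜ[ℝ] y i))) = 0 := by
        intro i hi
        rw [Finset.mem_filter] at hi
        simp only [map_smul, mulA_tmul]
        rw [πd_Wd_ne hi.2 (hWd i), smul_zero]
      rw [Finset.sum_congr rfl h1, Finset.sum_congr rfl h2, Finset.sum_const_zero, add_zero]
    have hTmem : ∀ m : ℕ, mulA (T m) ∈ commSub := by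
      intro m
      rw [← hπ m]
      exact πd_commSub m hmem
    -- apply σ
    have hσ : ∀ m : ℕ, σQ (mulA (T m)) = 0 := fun m => σQ_commSub (hTmem m)
    have hσval : ∀ m : ℕ, σQ (mulA (T m)) = ((m : ℝ) * ((m : ℝ) - 1)) • qQ (T m) := by
      intro m
      rw [hT, map_sum, map_sum, map_sum, Finset.smul_sum]
      refine Finset.sum_congr rfl (fun i hi => ?_)
      rw [Finset.mem_filter] at hi
      simp only [map_smul, mulA_tmul]
      rw [σQ_mon_mul (hp i) (hq i)]
      have hcoe : ((⟨(x i : A), (hp i).mem_L⟩ : ↥L) ⊗ₜ[ℝ] (⟨(y i : A), (hq i).mem_L⟩ : ↥L)) =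
          x i ⊗ₜ[ℝ] y i := by
        congr 1
      rw [hcoe]
      have hco : ((p i : ℝ) + q i) = (m : ℝ) := by
        rw [← hi.2, hd]
        push_cast
        ring
      rw [hco, smul_comm]
    have hqT : ∀ m ∈ Finset.univ.image d, qQ (T m) = 0 := by
      intro m hm
      obtain ⟨i, _, hi⟩ := Finset.mem_image.mp hm
      have hm2 : 2 ≤ m := by
        have h1 := (hp i).pos
        have h2 := (hq i).pos
        have h3 : p i + q i = m := hi
        omega
      have hne : ((m : ℝ) * ((m : ℝ) - 1)) ≠ 0 := by
        have : (2 : ℝ) ≤ (m : ℝ) := by exact_mod_cast hm2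
        have h1 : (0 : ℝ) < (m : ℝ) := by linarith
        have h2 : (0 : ℝ) < (m : ℝ) - 1 := by linarith
        positivity
      have hzero : ((m : ℝ) * ((m : ℝ) - 1)) • qQ (T m) = 0 :=
        (hσval m).symm.trans (hσ m)
      have : qQ (T m) =
          (((m : ℝ) * ((m : ℝ) - 1))⁻¹ * ((m : ℝ) * ((m : ℝ) - 1))) • qQ (T m) := by
        rw [inv_mul_cancel₀ hne, one_smul]
      rw [this, mul_smul, hzero, smul_zero]
    have hqt : qQ t = 0 := by
      rw [← hfib, map_sum]
      exact Finset.sum_eq_zero hqT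
    rwa [qQ, Submodule.mkQ_apply, Submodule.Quotient.mk_eq_zero] at hqt
  · exact FLrel_le_ker t
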